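/- Let Φ be an N×m real matrix of ROM basis vectors, e ∈ ℝ^N, and suppose (i) the momentum-conservation constraint eᵀ Ω Φ Φᵀ = eᵀ holds, and (ii) the full-order right-hand side F : ℝ^N → ℝ^N globally conserves momentum, i.e. eᵀ F(W) = 0 for all W ∈ ℝ^N. If a : ℝ → ℝ^m is differentiable and satisfies the ROM evolution equation a'(t) = Φᵀ F(Φ a(t)) for all t, then the ROM global momentum P_r(t) := eᵀ Ω Φ a(t) is constant in time: d/dt P_r(t) = 0 for all t, and hence P_r(t) = P_r(0) for all t. -/

import Mathlib

open Matrix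

/-- Global momentum conservation of the ROM: if the exact-projection constraint
`eᵀ Ω Φ Φᵀ = eᵀ` holds and the FOM right-hand side conserves momentum
(`eᵀ F(W) = 0`), then the ROM momentum `P_r(t) = eᵀ Ω Φ a(t)` is constant. -/
theorem rom_global_momentum_conserved
    (N m : ℕ)
    (Ω : Matrix (Fin N) (Fin N) ℝ) (hΩdiag : Ω.IsDiag) (hΩpos : ∀ i, 0 < Ω i i)
    (Φ : Matrix (Fin N) (Fin m) ℝ) (e : Fin N → ℝ)
    (hproj : e ᵥ* (Ω * Φ * Φᵀ) = e)
    (F : (Fin N → ℝ) → (Fin N → ℝ)) (hF : ∀ W : Fin N → ℝ, e ⬝ᵥ F W = 0)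
    (a : ℝ → Fin m → ℝ)
    (ha : ∀ t, HasDerivAt a (Φᵀ *ᵥ F (Φ *ᵥ a t)) t) :
    (∀ t, HasDerivAt (fun s => e ⬝ᵥ (Ω *ᵥ (Φ *ᵥ a s))) 0 t) ∧
    (∀ t, e ⬝ᵥ (Ω *ᵥ (Φ *ᵥ a t)) = e ⬝ᵥ (Ω *ᵥ (Φ *ᵥ a 0))) := by
  set w : Fin m → ℝ := e ᵥ* (Ω * Φ) with hw
  have hfun : ∀ s, e ⬝ᵥ (Ω *ᵥ (Φ *ᵥ a s)) = w ⬝ᵥ a s := by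
    intro s
    rw [dotProduct_mulVec, dotProduct_mulVec, vecMul_vecMul]
  have hderiv : ∀ t, HasDerivAt (fun s => e ⬝ᵥ (Ω *ᵥ (Φ *ᵥ a s))) 0 t := by
    intro t
    have hzero : w ⬝ᵥ (Φᵀ *ᵥ F (Φ *ᵥ a t)) = 0 := by
      rw [dotProduct_mulVec, hw, vecMul_vecMul, hproj, hF]
    have h1 : HasDerivAt (fun s => w ⬝ᵥ a s)
        (w ⬝ᵥ (Φᵀ *ᵥ F (Φ *ᵥ a t))) t := by
      simp only [dotProduct]
      apply HasDerivAt.fun_sum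
      intro i _
      exact (hasDerivAt_pi.mp (ha t) i).const_mul (w i)
    have := hzero ▸ h1
    exact this.congr_of_eventuallyEq (Filter.Eventually.of_forall fun s => hfun s)
  refine ⟨hderiv, fun t => ?_⟩
  have hconst : ∀ t, e ⬝ᵥ (Ω *ᵥ (Φ *ᵥ a t)) = e ⬝ᵥ (Ω *ᵥ (Φ *ᵥ a 0)) := by
    intro t
    have := is_const_of_deriv_eq_zero (f := fun s => e ⬝ᵥ (Ω *ᵥ (Φ *ᵥ a s)))
      (fun s => (hderiv s).differentiableAt) (fun s => (hderiv s).deriv) t 0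
    exact this
  exact hconst t
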